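/- For a Q-metric space (X,d) over a continuous quantale, the specialization preorder of the open ball topology τ_d coincides with the preorder x ≤_d y defined by 1 ⊑ d(x,y). -/

import Mathlib

def wayBelow {Q : Type*} [CompleteLattice Q] (x y : Q) : Prop :=
  ∀ D : Set Q, D.Nonempty → DirectedOn (· ≤ ·) D → y ≤ sSup D → ∃ d ∈ D, x ≤ d

def ContinuousLattice (Q : Type*) [CompleteLattice Q] : Prop :=
  ∀ y : Q, y = sSup {x : Q | wayBelow x y}

/-- Open ball for a quantale-valued metric. -/
def ball {Q : Type*} [CompleteLattice Q] {X : Type*} (d : X → X → Q) (x : X) (δ : Q) :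
    Set X := {y : X | wayBelow δ (d x y)}

/-- The open ball topology. -/
def ballTopology {Q : Type*} [Monoid Q] [CompleteLattice Q] {X : Type*}
    (d : X → X → Q) : TopologicalSpace X :=
  TopologicalSpace.generateFrom {B : Set X | ∃ x δ, wayBelow δ (1 : Q) ∧ B = ball d x δ}

lemma wayBelow_mono {Q : Type*} [CompleteLattice Q] {δ a b : Q} (h : wayBelow δ a)
    (hab : a ≤ b) : wayBelow δ b := fun D hne hdir hle => h D hne hdir (hab.trans hle)

lemma wayBelow_le {Q : Type*} [CompleteLattice Q] {δ a : Q} (h : wayBelow δ a) : δ ≤ a := by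
  obtain ⟨d, hd, hle⟩ := h {a} ⟨a, rfl⟩ (directedOn_singleton a)
    (le_sSup rfl)
  rw [Set.mem_singleton_iff] at hd
  exact hd ▸ hle

theorem ballTopology_specialization {Q : Type*} [Monoid Q] [CompleteLattice Q] [IsQuantale Q]
    (hcont : ContinuousLattice Q) {X : Type*} (d : X → X → Q)
    (hrefl : ∀ x : X, (1 : Q) ≤ d x x)
    (htri : ∀ x y z : X, d x y * d y z ≤ d x z) (x y : X) :
    (∀ O : Set X, (ballTopology d).IsOpen O → x ∈ O → y ∈ O) ↔ (1 : Q) ≤ d x y := by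
  constructor
  · intro h
    calc (1 : Q) = sSup {δ : Q | wayBelow δ 1} := hcont 1
      _ ≤ d x y := by
        apply sSup_le
        intro δ hδ
        have hopen : (ballTopology d).IsOpen (ball d x δ) :=
          TopologicalSpace.GenerateOpen.basic _ ⟨x, δ, hδ, rfl⟩
        have hx : x ∈ ball d x δ := wayBelow_mono hδ (hrefl x)
        exact wayBelow_le (h _ hopen hx)
  · intro h1 O hO hx
    induction hO with
    | basic B hB =>
      obtain ⟨z, δ, hδ, rfl⟩ := hB
      refine wayBelow_mono hx ?_
      calc d z x = d z x * 1 := (mul_one _).symm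
        _ ≤ d z x * d x y := mul_le_mul_right h1 _
        _ ≤ d z y := htri z x y
    | univ => trivial
    | inter U V _ _ hU hV => exact ⟨hU hx.1, hV hx.2⟩
    | sUnion S _ hS =>
      obtain ⟨U, hU, hxU⟩ := hx
      exact ⟨U, hU, hS U hU hxU⟩
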